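/- For λ-terms U and V, the application (U V) is solvable if and only if U is solvable with head normal form U' and (U' V) is solvable. -/

import Mathlib

/-- Untyped λ-terms in de Bruijn notation. -/
inductive Lam : Type
  | var : ℕ → Lam
  | lam : Lam → Lam
  | app : Lam → Lam → Lam

namespace Lam

/-- Lift (shift by one) the de Bruijn indices ≥ `d`. -/
def lift : Lam → ℕ → Lam
  | var n, d => if n < d then var n else var (n + 1)
  | lam u, d => lam (lift u (d + 1))
  | app u v, d => app (lift u d) (lift v d)

/-- Capture-avoiding substitution `t[s/k]`. -/
def subst : Lam → ℕ → Lam → Lam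
  | var n, k, s => if n = k then s else if k < n then var (n - 1) else var n
  | lam u, k, s => lam (subst u (k + 1) (lift s 0))
  | app u v, k, s => app (subst u k s) (subst v k s)

/-- Head reduction: `λx̄.((λx.U) V) V₁ ... Vₖ →t λx̄.(U[V/x]) V₁ ... Vₖ`. -/
inductive Head : Lam → Lam → Prop
  | beta (u v : Lam) : Head (app (lam u) v) (subst u 0 v)
  | appL {u u' : Lam} (v : Lam) : Head u u' → (∀ w, u ≠ lam w) →
      Head (app u v) (app u' v)
  | abs {u u' : Lam} : Head u u' → Head (lam u) (lam u')

/-- Terms of the form `x V₁ ... Vₖ` for a variable `x`. -/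
inductive VarApp : Lam → Prop
  | var (n : ℕ) : VarApp (var n)
  | app {u : Lam} (v : Lam) : VarApp u → VarApp (app u v)

/-- Head normal forms: `λx₁...λxₘ.(x V₁ ... Vₖ)`. -/
inductive Hnf : Lam → Prop
  | base {t : Lam} : VarApp t → Hnf t
  | lam {t : Lam} : Hnf t → Hnf (lam t)

/-- A λ-term is solvable iff its head reduction reaches a head normal form. -/
def Solvable (t : Lam) : Prop :=
  ∃ t', Relation.ReflTransGen Head t t' ∧ Hnf t'

theorem lift_lift (t : Lam) : ∀ i j, i ≤ j → lift (lift t i) (j+1) = lift (lift t j) i := by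
  induction t with
  | var n =>
    intro i j h
    repeat' first
      | rfl
      | (exfalso; omega)
      | (congr 1 <;> omega)
      | (simp only [lift, subst])
      | split_ifs
  | lam u ih =>
    intro i j h
    simp only [lift, ih (i+1) (j+1) (by omega)]
  | app u v ihu ihv =>
    intro i j h
    simp only [lift, ihu i j h, ihv i j h]

theorem subst_lift_cancel (t : Lam) : ∀ k s, subst (lift t k) k s = t := by
  induction t with
  | var n =>
    intro k s
    repeat' first
      | rfl
      | (exfalso; omega)
      | (congr 1 <;> omega)
      | (simp only [lift, subst])
      | split_ifs
  | lam u ih => intro k s; simp only [lift, subst, ih]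
  | app u v ihu ihv => intro k s; simp only [lift, subst, ihu, ihv]

theorem lift_subst (t : Lam) : ∀ k s d, d ≤ k →
    lift (subst t k s) d = subst (lift t d) (k+1) (lift s d) := by
  induction t with
  | var n =>
    intro k s d h
    repeat' first
      | rfl
      | (exfalso; omega)
      | (congr 1 <;> omega)
      | (simp only [lift, subst])
      | split_ifs
  | lam u ih =>
    intro k s d h
    simp only [subst, lift, ih (k+1) (lift s 0) (d+1) (by omega), lift_lift s 0 d (by omega)]
  | app u v ihu ihv =>
    intro k s d h
    simp only [subst, lift, ihu k s d h, ihv k s d h]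

theorem subst_subst (t : Lam) : ∀ j m w s, j ≤ m →
    subst (subst t j w) m s = subst (subst t (m+1) (lift s j)) j (subst w m s) := by
  induction t with
  | var n =>
    intro j m w s h
    by_cases hn : n = m + 1
    · subst hn
      have L : subst (subst (var (m+1)) j w) m s = s := by
        simp only [subst]
        rw [if_neg (by omega), if_pos (by omega)]
        simp only [subst]
        rw [show m+1-1 = m from by omega, if_pos rfl]
      have R : subst (var (m+1)) (m+1) (lift s j) = lift s j := by
        simp [subst]
      rw [L, R, subst_lift_cancel]
    · repeat' first
        | rfl
        | (exfalso; omega)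
        | (congr 1 <;> omega)
        | (simp only [subst])
        | split_ifs
  | lam u ih =>
    intro j m w s h
    simp only [subst]
    rw [ih (j+1) (m+1) (lift w 0) (lift s 0) (by omega), lift_lift s 0 j (by omega),
      lift_subst w m s 0 (by omega)]
  | app u v ihu ihv =>
    intro j m w s h
    simp only [subst, ihu j m w s h, ihv j m w s h]
theorem Head.not_var {n : ℕ} {t : Lam} (h : Head (var n) t) : False := by cases h

theorem Head.subst_congr {u u' : Lam} (h : Head u u') (k : ℕ) (s : Lam) :
    Head (subst u k s) (subst u' k s) := by
  induction h generalizing k s with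
  | beta w v =>
    have := Head.beta (subst w (k+1) (lift s 0)) (subst v k s)
    rw [← subst_subst w 0 k v s (by omega)] at this
    simpa [subst] using this
  | appL v hstep hne ih =>
    rename_i a a'
    have hne' : ∀ w, subst a k s ≠ lam w := by
      intro w hw
      cases a with
      | var n => exact (Head.not_var hstep).elim
      | lam b => exact hne b rfl
      | app b c => simp [subst] at hw
    simpa [subst] using Head.appL (subst v k s) (ih k s) hne'
  | abs hstep ih =>
    simpa [subst] using Head.abs (ih (k+1) (lift s 0))

theorem Head.deterministic {t a b : Lam} (h1 : Head t a) (h2 : Head t b) : a = b := by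
  induction h1 generalizing b with
  | beta u v =>
    cases h2 with
    | beta => rfl
    | appL v hs hne => exact absurd rfl (hne u)
  | appL v hs hne ih =>
    cases h2 with
    | beta u v => exact absurd rfl (hne u)
    | appL v hs' hne' => rw [ih hs']
  | abs hs ih =>
    cases h2 with
    | abs hs' => rw [ih hs']

theorem VarApp.no_step {t t' : Lam} (hv : VarApp t) (h : Head t t') : False := by
  induction hv generalizing t' with
  | var n => cases h
  | app v hva ih =>
    cases h with
    | beta u v => cases hva
    | appL v hs hne => exact ih hs

theorem Hnf.no_step {t t' : Lam} (hn : Hnf t) (h : Head t t') : False := by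
  induction hn generalizing t' with
  | base hva => exact hva.no_step h
  | lam hn ih => cases h with | abs hs => exact ih hs

theorem progress (t : Lam) : Hnf t ∨ ∃ t', Head t t' := by
  induction t with
  | var n => exact Or.inl (Hnf.base (VarApp.var n))
  | lam u ih =>
    rcases ih with h | ⟨u', hu'⟩
    · exact Or.inl h.lam
    · exact Or.inr ⟨lam u', Head.abs hu'⟩
  | app u v ihu ihv =>
    rcases ihu with h | ⟨u', hu'⟩
    · cases h with
      | base hva => exact Or.inl (Hnf.base (hva.app v))
      | lam hn => exact Or.inr ⟨_, Head.beta _ v⟩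
    · cases u with
      | var n => exact (Head.not_var hu').elim
      | lam w => exact Or.inr ⟨_, Head.beta w v⟩
      | app a b => exact Or.inr ⟨_, Head.appL v hu' (fun w h => by cases h)⟩

open Relation in
theorem rtg_of_hnf {a b : Lam} (h : ReflTransGen Head a b) (ha : Hnf a) : a = b := by
  cases h.cases_head with
  | inl h => exact h
  | inr h => exact absurd h.choose_spec.1 (fun hs => ha.no_step hs)

open Relation in
theorem rtg_comparable {a b c : Lam} (h1 : ReflTransGen Head a b) (h2 : ReflTransGen Head a c) :
    ReflTransGen Head b c ∨ ReflTransGen Head c b := by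
  induction h1 using ReflTransGen.head_induction_on with
  | refl => exact Or.inl h2
  | head hs htail ih =>
    rename_i x y
    cases h2.cases_head with
    | inl h => subst h; exact Or.inr (htail.head hs)
    | inr h =>
      obtain ⟨z, hz1, hz2⟩ := h
      rw [Head.deterministic hs hz1] at *
      exact ih hz2

theorem Solvable.of_rtg {a b : Lam} (hs : Solvable a) (h : Relation.ReflTransGen Head a b) :
    Solvable b := by
  obtain ⟨t', ht1, ht2⟩ := hs
  rcases rtg_comparable ht1 h with h' | h'
  · rw [rtg_of_hnf h' ht2] at ht2; exact ⟨b, Relation.ReflTransGen.refl, ht2⟩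
  · exact ⟨t', h', ht2⟩

theorem solvable_of_subst {u : Lam} (k : ℕ) (s : Lam) (h : Solvable (subst u k s)) :
    Solvable u := by
  obtain ⟨T, hT, hTn⟩ := h
  have key : ∀ A, Relation.ReflTransGen Head A T → ∀ u, A = subst u k s → Solvable u := by
    intro A hA
    induction hA using Relation.ReflTransGen.head_induction_on with
    | refl =>
      intro u hu
      rcases progress u with h | ⟨u', hu'⟩
      · exact ⟨u, Relation.ReflTransGen.refl, h⟩
      · rw [hu] at hTn
        exact (hTn.no_step (hu'.subst_congr k s)).elim
    | head hs htail ih =>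
      intro u hu
      rcases progress u with h | ⟨u', hu'⟩
      · exact ⟨u, Relation.ReflTransGen.refl, h⟩
      · subst hu
        have hd := Head.deterministic hs (hu'.subst_congr k s)
        obtain ⟨h1, h2, h3⟩ := ih u' hd
        exact ⟨h1, h2.head hu', h3⟩
  exact key _ hT u rfl
open Relation in
theorem app_forward : ∀ {A T : Lam}, ReflTransGen Head A T → Hnf T →
    ∀ U V, A = app U V →
    ∃ U', ReflTransGen Head U U' ∧ Hnf U' ∧ ReflTransGen Head (app U' V) T := by
  intro A T hA
  induction hA using ReflTransGen.head_induction_on with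
  | refl =>
    intro hTn U V hU
    subst hU
    cases hTn with
    | base hva =>
      cases hva with
      | app v hva' => exact ⟨U, .refl, Hnf.base hva', .refl⟩
  | head hs htail ih =>
    intro hTn U V hU
    subst hU
    cases hs with
    | beta u v =>
      have hu : Solvable u := solvable_of_subst 0 V ⟨T, htail, hTn⟩
      obtain ⟨h, hh1, hh2⟩ := hu
      refine ⟨lam h, ?_, hh2.lam, ?_⟩
      · exact ReflTransGen.lift lam (fun a b hab => Head.abs hab) _ _ hh1
      · have hsub : ReflTransGen Head (subst u 0 V) (subst h 0 V) :=
          ReflTransGen.lift (fun x => subst x 0 V) (fun a b hab => (hab : Head a b).subst_congr 0 V) _ _ hh1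
        have hend : ReflTransGen Head (subst h 0 V) T := by
          rcases rtg_comparable htail hsub with h' | h'
          · rw [rtg_of_hnf h' hTn]
          · exact h'
        exact hend.head (Head.beta h V)
    | appL v hstep hne =>
      rename_i U2
      obtain ⟨W, hW1, hW2, hW3⟩ := ih hTn U2 V rfl
      exact ⟨W, hW1.head hstep, hW2, hW3⟩

open Relation in
theorem app_backward {U U' V : Lam} (hU : ReflTransGen Head U U') (hs : Solvable (app U' V)) :
    Solvable (app U V) := by
  induction hU using ReflTransGen.head_induction_on with
  | refl => exact hs
  | head hstep htail ih =>
    rename_i a b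
    cases a with
    | var n => exact (Head.not_var hstep).elim
    | app p q =>
      have hst : Head (app (app p q) V) (app b V) := Head.appL V hstep (by intro w h; cases h)
      obtain ⟨t', h1, h2⟩ := ih
      exact ⟨t', h1.head hst, h2⟩
    | lam w =>
      cases hstep with
      | abs hw =>
        rename_i w'
        have h1 : Solvable (subst w' 0 V) :=
          ih.of_rtg (ReflTransGen.single (Head.beta w' V))
        have h2 : Head (subst w 0 V) (subst w' 0 V) := hw.subst_congr 0 V
        obtain ⟨t', ht1, ht2⟩ := h1
        exact ⟨t', (ht1.head h2).head (Head.beta w V), ht2⟩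

end Lam

/-- `(U V)` is solvable iff `U` is solvable with head normal form `U'`
and `(U' V)` is solvable. -/
theorem app_solvable_iff (U V : Lam) :
    Lam.Solvable (.app U V) ↔
      ∃ U', Relation.ReflTransGen Lam.Head U U' ∧ Lam.Hnf U' ∧
        Lam.Solvable (.app U' V) := by
  constructor
  · rintro ⟨T, hT, hTn⟩
    obtain ⟨U', h1, h2, h3⟩ := Lam.app_forward hT hTn U V rfl
    exact ⟨U', h1, h2, ⟨T, h3, hTn⟩⟩
  · rintro ⟨U', h1, _, h3⟩
    exact Lam.app_backward h1 h3
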